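/- Let q be a prime power, 1 ≤ k < n integers, and let c be an integer with max{0, 2k−n} ≤ c ≤ k−1. Write n − c = h(k−c) + r with 0 ≤ r ≤ k−c−1 and h ≥ 2. Then there exists a sunflower C ⊆ G_q(k,n) with center of dimension c and cardinality |C| = (q^{n−c} − q^r)/(q^{k−c} − 1) − q^r + 1. -/

import Mathlib

open Submodule Module Set

/-- The orthogonal complement of a subspace of `Fin n → F` with respect to the
standard bilinear form `(x, y) ↦ ∑ i, x i * y i`. -/
def stdOrth {F : Type} [Field F] {n : ℕ} (U : Submodule F (Fin n → F)) :
    Submodule F (Fin n → F) where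
  carrier := {x | ∀ y ∈ U, ∑ i, x i * y i = 0}
  add_mem' := by
    intro a b ha hb y hy
    simp only [Set.mem_setOf_eq] at *
    simp [add_mul, Finset.sum_add_distrib, ha y hy, hb y hy]
  zero_mem' := by intro y hy; simp
  smul_mem' := by
    intro c a ha y hy
    simp only [Set.mem_setOf_eq] at *
    simp [smul_eq_mul, mul_assoc, ← Finset.mul_sum, ha y hy]

/-- An equidistant `c`-intersecting subspace code of constant dimension `k` in `F^n`:
a set of at least two `k`-dimensional subspaces, any two distinct members of which
intersect in dimension `c`. -/
def IsEquidistantCode (F : Type) [Field F] (n k c : ℕ)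
    (C : Set (Submodule F (Fin n → F))) : Prop :=
  2 ≤ C.ncard ∧ (∀ U ∈ C, Module.finrank F U = k) ∧
    ∀ U ∈ C, ∀ V ∈ C, U ≠ V → Module.finrank F ↥(U ⊓ V) = c

/-- A set of subspaces is a sunflower if there is a common center `Z` equal to the
intersection of any two distinct members. -/
def IsSunflower {F : Type} [Field F] {n : ℕ} (C : Set (Submodule F (Fin n → F))) : Prop :=
  ∃ Z : Submodule F (Fin n → F), ∀ U ∈ C, ∀ V ∈ C, U ≠ V → U ⊓ V = Z

/-- `eMax F n k c` is the maximum cardinality of an equidistant `c`-intersecting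
code of constant dimension `k` in `F^n`. -/
noncomputable def eMax (F : Type) [Field F] (n k c : ℕ) : ℕ :=
  sSup {m | ∃ C : Set (Submodule F (Fin n → F)), IsEquidistantCode F n k c C ∧ C.ncard = m}

section SunflowerAux

open Polynomial

theorem exists_field_ext (F : Type) [Field F] [Fintype F] (e : ℕ) (he : 0 < e) :
    ∃ (E : Type) (_ : Field E) (_ : Algebra F E) (_ : Fintype E),
      Module.finrank F E = e := by
  classical
  set q := Fintype.card F with hq
  obtain ⟨p, hc⟩ := CharP.exists F
  obtain ⟨d, pp, hcard⟩ := FiniteField.card F p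
  haveI : Fact p.Prime := ⟨pp⟩
  set Ω := AlgebraicClosure F
  haveI : CharP Ω p := charP_of_injective_algebraMap (algebraMap F Ω).injective p
  haveI : ExpChar Ω p := ExpChar.prime pp
  set N := q ^ e with hN
  have hNp : N = p ^ (d * e) := by rw [hN, hq, hcard, ← pow_mul]
  have hq2 : 2 ≤ q := Fintype.one_lt_card
  have hN2 : 2 ≤ N := le_trans hq2 (Nat.le_self_pow he.ne' q)
  set φ : Ω →+* Ω := iterateFrobenius Ω p (d * e) with hφ
  have hφx : ∀ x : Ω, φ x = x ^ N := by
    intro x; rw [hφ, iterateFrobenius_def, hNp]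
  set E' : Subfield Ω := RingHom.eqLocusField φ (RingHom.id Ω) with hE'
  have hmem : ∀ x : Ω, x ∈ E' ↔ x ^ N = x := by
    intro x
    constructor
    · intro hx; have : φ x = x := hx; rwa [hφx] at this
    · intro hx; show φ x = RingHom.id Ω x; rw [hφx]; simpa using hx
  -- the defining polynomial
  set g : Polynomial Ω := X ^ N - X with hg
  have hgsep : g.Separable := galois_poly_separable p N (hNp ▸ dvd_pow_self p (by positivity))
  have hgsplits : g.Splits := IsAlgClosed.splits g
  have hgdeg : g.natDegree = N := by
    have := FiniteField.X_pow_card_pow_sub_X_natDegree_eq Ω (n := e) (p := q) he.ne' hq2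
    rwa [← hN] at this
  have hcardroot : Fintype.card (g.rootSet Ω) = N := by
    rw [card_rootSet_eq_natDegree hgsep (IsAlgClosed.splits_domain g), hgdeg]
  have hseteq : (E' : Set Ω) = g.rootSet Ω := by
    ext x
    rw [SetLike.mem_coe, hmem, mem_rootSet]
    have hgne : g ≠ 0 := by
      intro h0
      have := hgdeg
      rw [h0] at this
      simp at this; omega
    constructor
    · intro hx; exact ⟨hgne, by simp [hg, sub_eq_zero, hx]⟩
    · intro ⟨_, hx⟩
      simp only [hg, map_sub, map_pow, aeval_X, sub_eq_zero] at hx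
      exact hx
  have hfin : (E' : Set Ω).Finite := by rw [hseteq]; exact Set.toFinite _
  haveI : Finite ↥E' := hfin
  haveI fE : Fintype ↥E' := Fintype.ofFinite _
  have halg : ∀ x : F, algebraMap F Ω x ∈ E' := by
    intro x
    rw [hmem, ← map_pow, hN, hq, FiniteField.pow_card_pow]
  letI : Algebra F ↥E' := ((algebraMap F Ω).codRestrict E'.toSubring halg).toAlgebra
  have hcardE : Nat.card ↥E' = N := by
    have h1 : Nat.card ↥E' = Nat.card (g.rootSet Ω) :=
      Nat.card_congr (Equiv.setCongr hseteq)
    rw [h1, Nat.card_eq_fintype_card, hcardroot]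
  have hfr : Module.finrank F ↥E' = e := by
    have h2 : Fintype.card ↥E' = q ^ Module.finrank F ↥E' := card_eq_pow_finrank
    rw [← Nat.card_eq_fintype_card, hcardE, hN] at h2
    exact (Nat.pow_right_injective hq2 h2.symm)
  exact ⟨↥E', inferInstance, inferInstance, fE, hfr⟩

def IsPartialSpread (F : Type) [Field F] {V : Type} [AddCommGroup V] [Module F V]
    (m : ℕ) (P : Set (Submodule F V)) : Prop :=
  (∀ U ∈ P, Module.finrank F U = m) ∧ ∀ U ∈ P, ∀ W ∈ P, U ≠ W → U ⊓ W = ⊥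

lemma exists_submodule_finrank (F : Type) [Field F] (V : Type) [AddCommGroup V]
    [Module F V] [FiniteDimensional F V] (m : ℕ) (hm : m ≤ Module.finrank F V) :
    ∃ S : Submodule F V, Module.finrank F S = m := by
  classical
  let b := finBasis F V
  let v : Fin m → V := b ∘ Fin.castLE hm
  have hli : LinearIndependent F v :=
    b.linearIndependent.comp _ (Fin.castLE_injective hm)
  refine ⟨span F (Set.range v), ?_⟩
  rw [finrank_span_eq_card hli, Fintype.card_fin]

lemma spread_map (F : Type) [Field F] {V V' : Type} [AddCommGroup V] [Module F V]
    [AddCommGroup V'] [Module F V'] (φ : V ≃ₗ[F] V') {m : ℕ}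
    {P : Set (Submodule F V)} (hP : IsPartialSpread F m P) :
    IsPartialSpread F m ((Submodule.map (φ : V →ₗ[F] V')) '' P) ∧
      ((Submodule.map (φ : V →ₗ[F] V')) '' P).ncard = P.ncard := by
  obtain ⟨hdim, hint⟩ := hP
  refine ⟨⟨?_, ?_⟩, ?_⟩
  · rintro U ⟨W, hW, rfl⟩
    rw [LinearEquiv.finrank_map_eq]
    exact hdim W hW
  · rintro U ⟨W, hW, rfl⟩ U' ⟨W', hW', rfl⟩ hne
    have hWW' : W ≠ W' := by rintro rfl; exact hne rfl
    have h := Submodule.map_inf (φ : V →ₗ[F] V') (p := W) (q := W') φ.injective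
    rw [hint W hW W' hW' hWW', Submodule.map_bot] at h
    exact h.symm
  · exact Set.ncard_image_of_injective _ (Submodule.map_injective_of_injective φ.injective)

lemma spread_step (F : Type) [Field F] [Fintype F] (E : Type) [Field E] [Algebra F E]
    [Fintype E] (m : ℕ) (hm : 0 < m) (S : Submodule F E)
    (hS : Module.finrank F S = m) (P : Set (Submodule F E))
    (hP : IsPartialSpread F m P) :
    ∃ P' : Set (Submodule F (↥S × E)), IsPartialSpread F m P' ∧
      P'.ncard = Fintype.card E + P.ncard := by
  classical
  haveI : FiniteDimensional F E := Module.finite_iff_finite.mpr inferInstance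
  -- a nonzero element of S
  have hSne : S ≠ ⊥ := by
    intro h
    rw [h, finrank_bot] at hS
    omega
  obtain ⟨x₀, hx₀S, hx₀⟩ := Submodule.exists_mem_ne_zero_of_ne_bot hSne
  -- the graph subspaces
  set f : E → (↥S →ₗ[F] E) := fun a => (LinearMap.mulLeft F a).comp S.subtype with hf
  set U : E → Submodule F (↥S × E) := fun a => LinearMap.range (LinearMap.prod LinearMap.id (f a))
    with hU
  have hUmem : ∀ a : E, ∀ z : ↥S × E, z ∈ U a ↔ ∃ x : ↥S, (x, a * (x : E)) = z := by
    intro a z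
    simp [hU, LinearMap.mem_range, LinearMap.prod_apply, hf, Prod.ext_iff]
  set W' : Submodule F E → Submodule F (↥S × E) := fun W => Submodule.map (LinearMap.inr F ↥S E) W
    with hW'
  have hWmem : ∀ W : Submodule F E, ∀ z : ↥S × E, z ∈ W' W ↔ z.1 = 0 ∧ z.2 ∈ W := by
    intro W z
    simp only [hW', Submodule.mem_map, LinearMap.inr_apply]
    constructor
    · rintro ⟨y, hy, rfl⟩; exact ⟨rfl, hy⟩
    · rintro ⟨h1, h2⟩; exact ⟨z.2, h2, by rw [← h1]⟩
  refine ⟨Set.range U ∪ W' '' P, ⟨?_, ?_⟩, ?_⟩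
  · rintro X (⟨a, rfl⟩ | ⟨W, hW, rfl⟩)
    · rw [hU]
      have hinj : Function.Injective (LinearMap.prod (LinearMap.id (R := F) (M := ↥S)) (f a)) := by
        intro x y hxy
        exact congrArg Prod.fst hxy
      rw [LinearMap.finrank_range_of_inj hinj]
      exact hS
    · rw [hW']
      rw [← LinearEquiv.finrank_eq (Submodule.equivMapOfInjective _ (LinearMap.inr_injective) W)]
      exact (hP.1 W hW).symm ▸ rfl
  · rintro X (⟨a, rfl⟩ | ⟨W, hW, rfl⟩) Y (⟨b, rfl⟩ | ⟨W₂, hW₂, rfl⟩) hne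
    · -- two graphs
      have hab : a ≠ b := by rintro rfl; exact hne rfl
      rw [Submodule.eq_bot_iff]
      rintro z hz
      rw [Submodule.mem_inf] at hz
      obtain ⟨hz1, hz2⟩ := hz
      rw [hUmem] at hz1 hz2
      obtain ⟨x, rfl⟩ := hz1
      obtain ⟨y, hy⟩ := hz2
      have hxy : y = x := congrArg Prod.fst hy
      subst hxy
      have h2 : b * (y : E) = a * (y : E) := congrArg Prod.snd hy
      have hy0 : (y : E) = 0 := by
        by_contra h0
        exact hab (mul_right_cancel₀ h0 h2.symm)
      have : y = 0 := Subtype.ext hy0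
      simp [this]
    · -- graph vs inr
      rw [Submodule.eq_bot_iff]
      rintro z hz
      rw [Submodule.mem_inf] at hz
      obtain ⟨hz1, hz2⟩ := hz
      rw [hUmem] at hz1
      rw [hWmem] at hz2
      obtain ⟨x, rfl⟩ := hz1
      have hx0 : x = 0 := hz2.1
      simp [hx0]
    · rw [Submodule.eq_bot_iff]
      rintro z hz
      rw [Submodule.mem_inf] at hz
      obtain ⟨hz1, hz2⟩ := hz
      rw [hWmem] at hz1
      rw [hUmem] at hz2
      obtain ⟨x, rfl⟩ := hz2
      have hx0 : x = 0 := hz1.1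
      simp [hx0]
    · have hWW : W ≠ W₂ := by rintro rfl; exact hne rfl
      have h := Submodule.map_inf (LinearMap.inr F ↥S E) (p := W) (q := W₂) LinearMap.inr_injective
      rw [hP.2 W hW W₂ hW₂ hWW, Submodule.map_bot] at h
      exact h.symm
  · -- cardinality
    haveI : Finite (Submodule F (↥S × E)) :=
      Finite.of_injective (fun X : Submodule F (↥S × E) => (X : Set (↥S × E)))
        SetLike.coe_injective
    have hx₀' : (⟨x₀, hx₀S⟩ : ↥S) ≠ 0 := by
      intro h0
      exact hx₀ (congrArg Subtype.val h0)
    have hdisj : Disjoint (Set.range U) (W' '' P) := by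
      rw [Set.disjoint_left]
      rintro X ⟨a, rfl⟩ ⟨W, hW, hXW⟩
      have hmem1 : ((⟨x₀, hx₀S⟩ : ↥S), a * x₀) ∈ U a := by
        rw [hUmem]; exact ⟨⟨x₀, hx₀S⟩, rfl⟩
      rw [← hXW] at hmem1
      rw [hWmem] at hmem1
      exact hx₀' hmem1.1
    have hUinj : Function.Injective U := by
      intro a b hab
      have hmem1 : ((⟨x₀, hx₀S⟩ : ↥S), a * x₀) ∈ U a := by
        rw [hUmem]; exact ⟨⟨x₀, hx₀S⟩, rfl⟩
      rw [hab, hUmem] at hmem1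
      obtain ⟨y, hy⟩ := hmem1
      have h1 : y = ⟨x₀, hx₀S⟩ := congrArg Prod.fst hy
      have h2 : b * (y : E) = a * x₀ := congrArg Prod.snd hy
      rw [h1] at h2
      exact (mul_right_cancel₀ hx₀ h2).symm
    rw [Set.ncard_union_eq hdisj (Set.toFinite _) (Set.toFinite _),
      ← Set.image_univ, Set.ncard_image_of_injective _ hUinj, Set.ncard_univ,
      Nat.card_eq_fintype_card,
      Set.ncard_image_of_injective _ (Submodule.map_injective_of_injective
        (LinearMap.inr_injective (M := ↥S) (M₂ := E)))]

lemma spread_exists (F : Type) [Field F] [Fintype F] (m r : ℕ) (hm : 0 < m) :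
    ∀ h : ℕ, 1 ≤ h → ∀ (V : Type) [AddCommGroup V] [Module F V] [FiniteDimensional F V],
      Module.finrank F V = h * m + r →
      ∃ P : Set (Submodule F V), IsPartialSpread F m P ∧
        P.ncard = 1 + ∑ i ∈ Finset.Ico 1 h, (Fintype.card F) ^ (i * m + r) := by
  refine Nat.le_induction ?_ ?_
  · intro V _ _ _ hV
    obtain ⟨S, hS⟩ := exists_submodule_finrank F V m (by rw [hV]; omega)
    refine ⟨{S}, ⟨?_, ?_⟩, by simp⟩
    · rintro U rfl; exact hS
    · rintro U rfl W rfl hne; exact (hne rfl).elim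
  · intro h hh IH V _ _ _ hV
    have he : 0 < h * m + r := by positivity
    obtain ⟨E, iE, aE, fE, hE⟩ := exists_field_ext F (h * m + r) he
    haveI : FiniteDimensional F E := Module.finite_iff_finite.mpr inferInstance
    have hmle : m ≤ Module.finrank F E := by
      rw [hE]
      calc m = 1 * m := (one_mul m).symm
      _ ≤ h * m := Nat.mul_le_mul_right m hh
      _ ≤ h * m + r := Nat.le_add_right _ _
    obtain ⟨S, hS⟩ := exists_submodule_finrank F E m hmle
    obtain ⟨P, hP, hcard⟩ := IH E hE
    obtain ⟨P', hP', hcard'⟩ := spread_step F E m hm S hS P hP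
    have hfr : Module.finrank F (↥S × E) = Module.finrank F V := by
      rw [Module.finrank_prod, hS, hE, hV, Nat.succ_mul]
      omega
    obtain ⟨φ⟩ := FiniteDimensional.nonempty_linearEquiv_of_finrank_eq hfr
    obtain ⟨hsp, hnc⟩ := spread_map F φ hP'
    refine ⟨_, hsp, ?_⟩
    rw [hnc, hcard', hcard, Finset.sum_Ico_succ_top hh]
    have hcE : Fintype.card E = Fintype.card F ^ (h * m + r) := by
      rw [card_eq_pow_finrank (K := F) (V := E), hE]
    rw [hcE]
    omega

lemma nat_geom (x : ℕ) (hx : 1 ≤ x) (h : ℕ) :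
    (x - 1) * ∑ i ∈ Finset.range h, x ^ i = x ^ h - 1 := by
  induction h with
  | zero => simp
  | succ n ih =>
    rw [Finset.sum_range_succ, Nat.mul_add, ih, Nat.sub_mul, one_mul, pow_succ, mul_comm x (x ^ n)]
    have h1 : 1 ≤ x ^ n := Nat.one_le_pow _ _ (by omega)
    have h2 : x ^ n ≤ x ^ n * x := Nat.le_mul_of_pos_right _ (by omega)
    omega

lemma arith_spread (q m r h : ℕ) (hq : 2 ≤ q) (hm : 0 < m) (hh : 1 ≤ h) :
    1 + ∑ i ∈ Finset.Ico 1 h, q ^ (i * m + r) =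
      (q ^ (h * m + r) - q ^ r) / (q ^ m - 1) - q ^ r + 1 := by
  have hxm : 2 ≤ q ^ m := by
    calc 2 = 2 ^ 1 := rfl
    _ ≤ q ^ m := Nat.pow_le_pow_left hq m |>.trans' (Nat.pow_le_pow_right (by omega) hm)
  have hterm : ∀ i : ℕ, q ^ (i * m + r) = q ^ r * (q ^ m) ^ i := by
    intro i
    rw [pow_add, ← pow_mul, mul_comm (q ^ r), mul_comm i m]
  have hnum : q ^ (h * m + r) - q ^ r = q ^ r * ((q ^ m) ^ h - 1) := by
    rw [hterm h, Nat.mul_sub, mul_one]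
  have hg := nat_geom (q ^ m) (by omega) h
  have hdiv : (q ^ (h * m + r) - q ^ r) / (q ^ m - 1) =
      q ^ r * ∑ i ∈ Finset.range h, (q ^ m) ^ i := by
    rw [hnum, ← hg, mul_comm (q ^ m - 1), ← mul_assoc,
      Nat.mul_div_cancel _ (by omega : 0 < q ^ m - 1)]
  rw [hdiv]
  have hsplit : ∑ i ∈ Finset.range h, (q ^ m) ^ i =
      1 + ∑ i ∈ Finset.Ico 1 h, (q ^ m) ^ i := by
    rw [Finset.range_eq_Ico, Finset.sum_eq_sum_Ico_succ_bot hh]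
    simp
  have hsum : ∑ i ∈ Finset.Ico 1 h, q ^ (i * m + r) =
      q ^ r * ∑ i ∈ Finset.Ico 1 h, (q ^ m) ^ i := by
    rw [Finset.mul_sum]
    exact Finset.sum_congr rfl fun i _ => hterm i
  rw [hsum, hsplit, Nat.mul_add, mul_one]
  have h1 : 1 ≤ q ^ r := Nat.one_le_pow _ _ (by omega)
  omega
/-- The product of two submodules is equivalent to the product of the subtypes. -/
def prodSubEquiv (F : Type) [Field F] {M N : Type} [AddCommGroup M] [Module F M]
    [AddCommGroup N] [Module F N] (p : Submodule F M) (w : Submodule F N) :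
    ↥(p.prod w) ≃ₗ[F] ↥p × ↥w where
  toFun z := (⟨z.val.1, z.prop.1⟩, ⟨z.val.2, z.prop.2⟩)
  invFun x := ⟨(x.1.val, x.2.val), ⟨x.1.prop, x.2.prop⟩⟩
  map_add' _ _ := rfl
  map_smul' _ _ := rfl
  left_inv _ := rfl
  right_inv _ := rfl

lemma top_prod_inf (F : Type) [Field F] {M N : Type} [AddCommGroup M] [Module F M]
    [AddCommGroup N] [Module F N] (W₁ W₂ : Submodule F N) :
    (⊤ : Submodule F M).prod W₁ ⊓ (⊤ : Submodule F M).prod W₂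
      = (⊤ : Submodule F M).prod (W₁ ⊓ W₂) := by
  ext z
  simp only [Submodule.mem_inf, Submodule.mem_prod, Submodule.mem_top, true_and]

end SunflowerAux

/-- Systematic construction of sunflower codes: for any admissible parameters
`k, n, c`, writing `n - c = h (k - c) + r` with `0 ≤ r ≤ k - c - 1` and `h ≥ 2`,
there is a sunflower in `G_q(k,n)` with center of dimension `c` and cardinality
`(q^{n-c} - q^r)/(q^{k-c} - 1) - q^r + 1`. -/

theorem sunflower_code_construction
    (q : ℕ) (hq : IsPrimePow q) (F : Type) [Field F] [Fintype F]
    (hF : Fintype.card F = q) (k n c h r : ℕ) (hk : 1 ≤ k) (hkn : k < n)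
    (hc1 : 2 * k ≤ n + c) (hc2 : c ≤ k - 1)
    (hhr : n - c = h * (k - c) + r) (hrk : r ≤ k - c - 1) (hh : 2 ≤ h) :
    ∃ (C : Set (Submodule F (Fin n → F))) (Z : Submodule F (Fin n → F)),
      2 ≤ C.ncard ∧ (∀ U ∈ C, Module.finrank F U = k) ∧
      (∀ U ∈ C, ∀ V ∈ C, U ≠ V → U ⊓ V = Z) ∧ Module.finrank F Z = c ∧
      C.ncard = (q ^ (n - c) - q ^ r) / (q ^ (k - c) - 1) - q ^ r + 1 := by
  classical
  set m := k - c with hmdef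
  have hck : c < k := by omega
  have hm : 0 < m := by omega
  have hcn : c ≤ n := by omega
  have hq2 : 2 ≤ q := hq.two_le
  -- the partial spread in `Fin (n - c) → F`
  have hfr2 : Module.finrank F (Fin (n - c) → F) = h * m + r := by
    rw [Module.finrank_fin_fun, hhr]
  obtain ⟨P, hP, hPcard⟩ := spread_exists F m r hm h (by omega) (Fin (n - c) → F) hfr2
  -- the ambient equivalence
  have hfr3 : Module.finrank F ((Fin c → F) × (Fin (n - c) → F))
      = Module.finrank F (Fin n → F) := by
    rw [Module.finrank_prod, Module.finrank_fin_fun, Module.finrank_fin_fun,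
      Module.finrank_fin_fun]
    omega
  obtain ⟨ψ⟩ := FiniteDimensional.nonempty_linearEquiv_of_finrank_eq hfr3
  set g : Submodule F (Fin (n - c) → F) → Submodule F (Fin n → F) :=
    fun W => Submodule.map (ψ : ((Fin c → F) × (Fin (n - c) → F)) →ₗ[F] (Fin n → F))
      ((⊤ : Submodule F (Fin c → F)).prod W) with hg
  have hginj : Function.Injective g := by
    intro W₁ W₂ h12
    have hprod : (⊤ : Submodule F (Fin c → F)).prod W₁
        = (⊤ : Submodule F (Fin c → F)).prod W₂ :=
      Submodule.map_injective_of_injective ψ.injective h12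
    ext y
    have h1 := Submodule.ext_iff.mp hprod (0, y)
    simpa [Submodule.mem_prod] using h1
  have hgrank : ∀ W : Submodule F (Fin (n - c) → F),
      Module.finrank F (g W) = c + Module.finrank F W := by
    intro W
    rw [hg]
    simp only
    rw [LinearEquiv.finrank_map_eq ψ]
    rw [LinearEquiv.finrank_eq (prodSubEquiv F ⊤ W), Module.finrank_prod,
      finrank_top, Module.finrank_fin_fun]
  have hgint : ∀ W₁ W₂ : Submodule F (Fin (n - c) → F),
      g W₁ ⊓ g W₂ = g (W₁ ⊓ W₂) := by
    intro W₁ W₂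
    have hmi := Submodule.map_inf
      (ψ : ((Fin c → F) × (Fin (n - c) → F)) →ₗ[F] (Fin n → F))
      (p := (⊤ : Submodule F (Fin c → F)).prod W₁)
      (q := (⊤ : Submodule F (Fin c → F)).prod W₂) ψ.injective
    rw [top_prod_inf] at hmi
    exact hmi.symm
  refine ⟨g '' P, g ⊥, ?_, ?_, ?_, ?_, ?_⟩
  · -- 2 ≤ ncard
    rw [Set.ncard_image_of_injective _ hginj, hPcard]
    have hsplit := Finset.sum_eq_sum_Ico_succ_bot (by omega : 1 < h)
      (f := fun i => Fintype.card F ^ (i * m + r))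
    have h1 : 1 ≤ Fintype.card F ^ (1 * m + r) := Nat.one_le_pow _ _ Fintype.card_pos
    omega
  · rintro U ⟨W, hW, rfl⟩
    rw [hgrank W, hP.1 W hW]
    omega
  · rintro U ⟨W₁, hW₁, rfl⟩ V ⟨W₂, hW₂, rfl⟩ hne
    have h12 : W₁ ≠ W₂ := by rintro rfl; exact hne rfl
    rw [hgint, hP.2 W₁ hW₁ W₂ hW₂ h12]
  · rw [hgrank ⊥, finrank_bot]; omega
  · rw [Set.ncard_image_of_injective _ hginj, hPcard, hF,
      arith_spread q m r h hq2 hm (by omega), ← hhr]
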